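/- Let H be a complex Hilbert space and A_1, …, A_d bounded operators with ∑_{i=1}^d A_i* A_i ≤ cI for some c ∈ (0,1); let D := (I − ∑_{i=1}^d A_i* A_i)^{1/2}, Φ₀ : X → H a map, k₀(x,y) := ⟨Φ₀(x), Φ₀(y)⟩, k̃_M(x,y) := ∑_{|α|<M} ⟨D A_α Φ₀(x), D A_α Φ₀(y)⟩, and R_{N,M}(x) := ∑_{|α|=N} ‖A_α Φ₀(x)‖² + ∑_{M≤|α|<N} ‖D A_α Φ₀(x)‖². Then for every M ≥ 0, every N ≥ M, and every x ∈ X: R_{N,M}(x) = ∑_{|α|=M} ‖A_α Φ₀(x)‖² ≤ c^M k₀(x,x); consequently 0 ≤ k₀(x,x) − k̃_M(x,x) ≤ c^M k₀(x,x), and for all x, y ∈ X, |k₀(x,y) − k̃_M(x,y)| ≤ c^M (k₀(x,x) k₀(y,y))^{1/2}. -/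

import Mathlib

open ContinuousLinearMap ComplexOrder

/-- The operator `A_α = A_{i_n} ⋯ A_{i_1}` attached to the word `α = i_1 ⋯ i_n`;
the word is encoded as the list `[i_n, …, i_1]` (most recently applied letter first). -/
noncomputable def Aword {H : Type*} [NormedAddCommGroup H] [InnerProductSpace ℂ H]
    {d : ℕ} (A : Fin d → H →L[ℂ] H) : List (Fin d) → H →L[ℂ] H
  | [] => 1
  | i :: w => A i * Aword A w

section Aux

variable {H : Type*} [NormedAddCommGroup H] [InnerProductSpace ℂ H] [CompleteSpace H]
  {X : Type*} {d : ℕ} (A : Fin d → H →L[ℂ] H) (D : H →L[ℂ] H) (Φ : X → H)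

/-- `F n x y = ∑_{|α|=n} ⟨A_α Φx, A_α Φy⟩`. -/
noncomputable def Fsum (n : ℕ) (x y : X) : ℂ :=
  ∑ α : Fin n → Fin d, (inner ℂ (Aword A (List.ofFn α) (Φ x)) (Aword A (List.ofFn α) (Φ y)) : ℂ)

/-- `G n x y = ∑_{|α|=n} ⟨D A_α Φx, D A_α Φy⟩`. -/
noncomputable def Gsum (n : ℕ) (x y : X) : ℂ :=
  ∑ α : Fin n → Fin d,
    (inner ℂ (D (Aword A (List.ofFn α) (Φ x))) (D (Aword A (List.ofFn α) (Φ y))) : ℂ)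

lemma sum_pi_succ {β : Type*} [AddCommMonoid β] (n : ℕ) (g : (Fin (n + 1) → Fin d) → β) :
    ∑ α : Fin (n + 1) → Fin d, g α = ∑ i : Fin d, ∑ b : Fin n → Fin d, g (Fin.cons i b) := by
  have h : ∑ α : Fin (n + 1) → Fin d, g α
      = ∑ p : Fin d × (Fin n → Fin d), g (Fin.cons p.1 p.2) :=
    Fintype.sum_equiv ((Fin.consEquiv (fun _ => Fin d)).symm) _ _ (by
      intro α
      congr 1
      exact (Fin.cons_self_tail α).symm)
  rw [h, Fintype.sum_prod_type]

lemma aword_cons (n : ℕ) (i : Fin d) (b : Fin n → Fin d) (v : H) :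
    Aword A (List.ofFn (Fin.cons i b)) v = A i (Aword A (List.ofFn b) v) := by
  rw [List.ofFn_succ]
  simp [Aword, Fin.cons_succ]

lemma inner_decomp (hDpos : D.IsPositive)
    (hDsq : D * D = 1 - ∑ i, adjoint (A i) * A i) (v w : H) :
    (inner ℂ v w : ℂ) = (∑ i, (inner ℂ (A i v) (A i w) : ℂ)) + inner ℂ (D v) (D w) := by
  have hD : adjoint D = D := hDpos.isSelfAdjoint.adjoint_eq
  have h1 : ∀ i : Fin d, (inner ℂ (A i v) (A i w) : ℂ) = inner ℂ v ((adjoint (A i) * A i) w) := by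
    intro i; rw [ContinuousLinearMap.mul_apply, adjoint_inner_right]
  have h2 : (inner ℂ (D v) (D w) : ℂ) = inner ℂ v ((D * D) w) := by
    rw [ContinuousLinearMap.mul_apply, ← adjoint_inner_right (A := D), hD]
  simp_rw [h1, h2, ← inner_sum, ← ContinuousLinearMap.sum_apply, ← inner_add_right,
    ← ContinuousLinearMap.add_apply, hDsq]
  simp

lemma Fsum_succ (hDpos : D.IsPositive)
    (hDsq : D * D = 1 - ∑ i, adjoint (A i) * A i) (n : ℕ) (x y : X) :
    Fsum A Φ (n + 1) x y = Fsum A Φ n x y - Gsum A D Φ n x y := by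
  unfold Fsum Gsum
  rw [sum_pi_succ, Finset.sum_comm]
  simp_rw [aword_cons]
  rw [← Finset.sum_sub_distrib]
  congr 1
  ext b
  rw [eq_sub_iff_add_eq]
  exact (inner_decomp A D hDpos hDsq _ _).symm

lemma Fsum_zero (x y : X) : Fsum A Φ 0 x y = inner ℂ (Φ x) (Φ y) := by
  unfold Fsum
  rw [Fintype.sum_unique]
  simp [Aword]

lemma Fsum_telescope (hDpos : D.IsPositive)
    (hDsq : D * D = 1 - ∑ i, adjoint (A i) * A i) (m : ℕ) (x y : X) :
    Fsum A Φ 0 x y - ∑ n ∈ Finset.range m, Gsum A D Φ n x y = Fsum A Φ m x y := by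
  induction m with
  | zero => simp
  | succ m ih =>
    rw [Finset.sum_range_succ, Fsum_succ A D Φ hDpos hDsq, ← ih]
    ring

/-- `S n x = ∑_{|α|=n} ‖A_α Φx‖²`. -/
noncomputable def Ssum (n : ℕ) (x : X) : ℝ :=
  ∑ α : Fin n → Fin d, ‖Aword A (List.ofFn α) (Φ x)‖ ^ 2

/-- `T n x = ∑_{|α|=n} ‖D A_α Φx‖²`. -/
noncomputable def Tsum (n : ℕ) (x : X) : ℝ :=
  ∑ α : Fin n → Fin d, ‖D (Aword A (List.ofFn α) (Φ x))‖ ^ 2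

lemma Ssum_coe (n : ℕ) (x : X) : ((Ssum A Φ n x : ℝ) : ℂ) = Fsum A Φ n x x := by
  unfold Ssum Fsum
  push_cast
  refine Finset.sum_congr rfl fun α _ => ?_
  rw [inner_self_eq_norm_sq_to_K]
  norm_cast

lemma Tsum_coe (n : ℕ) (x : X) : ((Tsum A D Φ n x : ℝ) : ℂ) = Gsum A D Φ n x x := by
  unfold Tsum Gsum
  push_cast
  refine Finset.sum_congr rfl fun α _ => ?_
  rw [inner_self_eq_norm_sq_to_K]
  norm_cast

lemma Ssum_nonneg (n : ℕ) (x : X) : 0 ≤ Ssum A Φ n x :=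
  Finset.sum_nonneg fun _ _ => sq_nonneg _

lemma Tsum_nonneg (n : ℕ) (x : X) : 0 ≤ Tsum A D Φ n x :=
  Finset.sum_nonneg fun _ _ => sq_nonneg _

lemma sum_norm_le {c : ℝ}
    (hA : ((c : ℂ) • (1 : H →L[ℂ] H) - ∑ i, adjoint (A i) * A i).IsPositive) (v : H) :
    ∑ i, ‖A i v‖ ^ 2 ≤ c * ‖v‖ ^ 2 := by
  have h := hA.2 v
  rw [reApplyInnerSelf_apply] at h
  have hexp : (((c : ℂ) • (1 : H →L[ℂ] H) - ∑ i, adjoint (A i) * A i) v)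
      = (c : ℂ) • v - ∑ i, (adjoint (A i)) (A i v) := by
    simp [ContinuousLinearMap.sum_apply, ContinuousLinearMap.mul_apply]
  rw [hexp, inner_sub_left, inner_smul_left, sum_inner] at h
  have h3 : ∀ i : Fin d, (inner ℂ ((adjoint (A i)) (A i v)) v : ℂ) = ((‖A i v‖ ^ 2 : ℝ) : ℂ) := by
    intro i
    rw [adjoint_inner_left, inner_self_eq_norm_sq_to_K]
    norm_cast
  have h4 : (inner ℂ v v : ℂ) = ((‖v‖ ^ 2 : ℝ) : ℂ) := by
    rw [inner_self_eq_norm_sq_to_K]; norm_cast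
  rw [h4] at h
  simp_rw [h3] at h
  rw [Complex.conj_ofReal] at h
  have h5 : ((c : ℂ) * ((‖v‖ ^ 2 : ℝ) : ℂ) - ∑ i : Fin d, ((‖A i v‖ ^ 2 : ℝ) : ℂ))
      = ((c * ‖v‖ ^ 2 - ∑ i, ‖A i v‖ ^ 2 : ℝ) : ℂ) := by
    push_cast
    ring
  rw [h5] at h
  rw [show RCLike.re ((c * ‖v‖ ^ 2 - ∑ i, ‖A i v‖ ^ 2 : ℝ) : ℂ)
      = c * ‖v‖ ^ 2 - ∑ i, ‖A i v‖ ^ 2 from Complex.ofReal_re _] at h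
  linarith

lemma Ssum_succ_le {c : ℝ}
    (hA : ((c : ℂ) • (1 : H →L[ℂ] H) - ∑ i, adjoint (A i) * A i).IsPositive) (n : ℕ) (x : X) :
    Ssum A Φ (n + 1) x ≤ c * Ssum A Φ n x := by
  unfold Ssum
  rw [sum_pi_succ, Finset.sum_comm, Finset.mul_sum]
  refine Finset.sum_le_sum fun b _ => ?_
  simp_rw [aword_cons]
  exact sum_norm_le A hA _

lemma Ssum_le_pow {c : ℝ} (hc0 : 0 ≤ c)
    (hA : ((c : ℂ) • (1 : H →L[ℂ] H) - ∑ i, adjoint (A i) * A i).IsPositive) (m : ℕ) (x : X) :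
    Ssum A Φ m x ≤ c ^ m * Ssum A Φ 0 x := by
  induction m with
  | zero => simp
  | succ m ih =>
    calc Ssum A Φ (m + 1) x ≤ c * Ssum A Φ m x := Ssum_succ_le A Φ hA m x
      _ ≤ c * (c ^ m * Ssum A Φ 0 x) := by
          exact mul_le_mul_of_nonneg_left ih hc0
      _ = c ^ (m + 1) * Ssum A Φ 0 x := by ring

lemma Ssum_zero (x : X) : Ssum A Φ 0 x = ‖Φ x‖ ^ 2 := by
  unfold Ssum
  rw [Fintype.sum_unique]
  simp [Aword]

lemma norm_Fsum_le (m : ℕ) (x y : X) :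
    ‖Fsum A Φ m x y‖ ≤ Real.sqrt (Ssum A Φ m x * Ssum A Φ m y) := by
  have h1 : ‖Fsum A Φ m x y‖ ≤
      ∑ α : Fin m → Fin d, ‖Aword A (List.ofFn α) (Φ x)‖ * ‖Aword A (List.ofFn α) (Φ y)‖ := by
    refine (norm_sum_le _ _).trans (Finset.sum_le_sum fun α _ => ?_)
    exact norm_inner_le_norm _ _
  refine h1.trans ?_
  have hP : 0 ≤ ∑ α : Fin m → Fin d,
      ‖Aword A (List.ofFn α) (Φ x)‖ * ‖Aword A (List.ofFn α) (Φ y)‖ :=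
    Finset.sum_nonneg fun _ _ => mul_nonneg (norm_nonneg _) (norm_nonneg _)
  rw [Real.le_sqrt hP (mul_nonneg (Ssum_nonneg A Φ m x) (Ssum_nonneg A Φ m y))]
  unfold Ssum
  exact Finset.sum_mul_sq_le_sq_mul_sq _ _ _

end Aux

/-- **Geometric bound on the truncation error (Corollary 5.2).**
If `∑ᵢ Aᵢ* Aᵢ ≤ c I` with `c ∈ (0,1)` (expressed by positivity of `c I - ∑ Aᵢ* Aᵢ`),
then for all `0 ≤ M ≤ N` and `x`: `R_{N,M}(x) = ∑_{|α|=M} ‖A_α Φ₀(x)‖² ≤ c^M k₀(x,x)`,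
hence `0 ≤ k₀(x,x) - k̃_M(x,x) ≤ c^M k₀(x,x)` and
`|k₀(x,y) - k̃_M(x,y)| ≤ c^M (k₀(x,x) k₀(y,y))^{1/2}`. -/
theorem kernel_truncation_geometric_bound
    {H : Type*} [NormedAddCommGroup H] [InnerProductSpace ℂ H] [CompleteSpace H]
    {X : Type*} {d : ℕ} (A : Fin d → H →L[ℂ] H)
    (c : ℝ) (hc0 : 0 < c) (hc1 : c < 1)
    (hA : ((c : ℂ) • (1 : H →L[ℂ] H) - ∑ i, adjoint (A i) * A i).IsPositive)
    (D : H →L[ℂ] H) (hDpos : D.IsPositive)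
    (hDsq : D * D = 1 - ∑ i, adjoint (A i) * A i)
    (Φ : X → H) (M N : ℕ) (hMN : M ≤ N)
    (k₀ : X → X → ℂ) (hk₀ : ∀ x y, k₀ x y = inner ℂ (Φ x) (Φ y))
    (kt : X → X → ℂ)
    (hkt : ∀ x y, kt x y = ∑ n ∈ Finset.range M, ∑ α : Fin n → Fin d,
      (inner ℂ (D (Aword A (List.ofFn α) (Φ x))) (D (Aword A (List.ofFn α) (Φ y))) : ℂ))
    (R : X → ℝ)
    (hR : ∀ x, R x = (∑ α : Fin N → Fin d, ‖Aword A (List.ofFn α) (Φ x)‖ ^ 2)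
      + ∑ n ∈ Finset.Ico M N, ∑ α : Fin n → Fin d,
          ‖D (Aword A (List.ofFn α) (Φ x))‖ ^ 2) :
    (∀ x : X,
      R x = (∑ α : Fin M → Fin d, ‖Aword A (List.ofFn α) (Φ x)‖ ^ 2)
      ∧ (R x : ℂ) ≤ (c : ℂ) ^ M * k₀ x x
      ∧ 0 ≤ k₀ x x - kt x x
      ∧ k₀ x x - kt x x ≤ (c : ℂ) ^ M * k₀ x x)
    ∧ (∀ x y : X,
        ‖k₀ x y - kt x y‖ ≤ c ^ M * Real.sqrt ((k₀ x x).re * (k₀ y y).re)) := by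
  -- real recursion
  have hSrec : ∀ (n : ℕ) (x : X),
      Ssum A Φ n x = Ssum A Φ (n + 1) x + Tsum A D Φ n x := by
    intro n x
    have h2 : ((Ssum A Φ (n + 1) x : ℝ) : ℂ)
        = (((Ssum A Φ n x - Tsum A D Φ n x : ℝ)) : ℂ) := by
      push_cast
      rw [Ssum_coe, Ssum_coe, Tsum_coe, Fsum_succ A D Φ hDpos hDsq]
    have h3 := Complex.ofReal_injective h2
    linarith
  -- R = S M
  have hRS : ∀ x : X, R x = Ssum A Φ M x := by
    intro x
    have key : ∀ K : ℕ, M ≤ K →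
        Ssum A Φ K x + ∑ n ∈ Finset.Ico M K, Tsum A D Φ n x = Ssum A Φ M x := by
      intro K hK
      induction K, hK using Nat.le_induction with
      | base => simp
      | succ K hK ih =>
        rw [Finset.sum_Ico_succ_top hK]
        have h := hSrec K x
        linarith
    have := key N hMN
    rw [hR x]
    simpa [Ssum, Tsum] using this
  -- diagonal identities
  have hk0S : ∀ x : X, k₀ x x = ((Ssum A Φ 0 x : ℝ) : ℂ) := by
    intro x
    rw [hk₀, Ssum_coe, Fsum_zero]
  have hdiag : ∀ x : X, k₀ x x - kt x x = ((Ssum A Φ M x : ℝ) : ℂ) := by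
    intro x
    rw [hk₀, hkt, Ssum_coe, ← Fsum_zero A Φ]
    exact Fsum_telescope A D Φ hDpos hDsq M x x
  have hSle : ∀ x : X, Ssum A Φ M x ≤ c ^ M * Ssum A Φ 0 x :=
    fun x => Ssum_le_pow A Φ hc0.le hA M x
  have hpow : (c : ℂ) ^ M = ((c ^ M : ℝ) : ℂ) := by push_cast; ring
  constructor
  · intro x
    refine ⟨by rw [hRS x]; rfl, ?_, ?_, ?_⟩
    · rw [hRS x, hk0S x, hpow, ← Complex.ofReal_mul, Complex.real_le_real]
      exact hSle x
    · rw [hdiag x]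
      exact_mod_cast Complex.zero_le_real.mpr (Ssum_nonneg A Φ M x)
    · rw [hdiag x, hk0S x, hpow, ← Complex.ofReal_mul, Complex.real_le_real]
      exact hSle x
  · intro x y
    have hdiff : k₀ x y - kt x y = Fsum A Φ M x y := by
      rw [hk₀, hkt, ← Fsum_zero A Φ]
      exact Fsum_telescope A D Φ hDpos hDsq M x y
    rw [hdiff]
    refine (norm_Fsum_le A Φ M x y).trans ?_
    have hre : ∀ z : X, (k₀ z z).re = Ssum A Φ 0 z := by
      intro z
      rw [hk0S z, Complex.ofReal_re]
    rw [hre x, hre y]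
    have h1 : Real.sqrt (Ssum A Φ M x * Ssum A Φ M y)
        ≤ Real.sqrt ((c ^ M * Ssum A Φ 0 x) * (c ^ M * Ssum A Φ 0 y)) :=
      Real.sqrt_le_sqrt (mul_le_mul (hSle x) (hSle y) (Ssum_nonneg A Φ M y)
        (mul_nonneg (pow_nonneg hc0.le M) (Ssum_nonneg A Φ 0 x)))
    refine h1.trans ?_
    have h2 : (c ^ M * Ssum A Φ 0 x) * (c ^ M * Ssum A Φ 0 y)
        = (c ^ M) ^ 2 * (Ssum A Φ 0 x * Ssum A Φ 0 y) := by ring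
    rw [h2, Real.sqrt_mul (sq_nonneg _), Real.sqrt_sq (by positivity)]
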